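/- Let n ≥ k ≥ 1, let A ∈ M_{n,n}(F) and B ∈ M_{k,k}(F), and let T : M_{n,k}(F) → M_{n,k}(F) be the linear map T(X) = A·X·B. Then det_{n,k}(T(X)) = det_{n,k}(X) for all X ∈ M_{n,k}(F) if and only if det_{n,k}(A(|d]) · det(B) = sgn(d) for every k-element subset d of {1,…,n}. -/

import Mathlib

/- The Cullis determinant of an `n × k` matrix: the alternating sum of its maximal
(`k × k`) minors, indexed by strictly increasing selections of `k` rows. -/
open Classical in
noncomputable def cullisDet {F : Type*} [Field F] {n k : ℕ} (X : Matrix (Fin n) (Fin k) F) : F :=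
  ∑ f ∈ Finset.univ.filter (fun f : Fin k → Fin n => StrictMono f),
    (-1 : F) ^ (∑ α : Fin k, ((f α : ℕ) + (α : ℕ))) * (X.submatrix f id).det

section Aux

open Finset Equiv

lemma cullisDet_eq' {F : Type*} [Field F] {n k : ℕ} (X : Matrix (Fin n) (Fin k) F) :
    cullisDet X = ∑ f ∈ univ.filter (fun f : Fin k → Fin n => StrictMono f),
      (-1 : F) ^ (∑ α : Fin k, ((f α : ℕ) + (α : ℕ))) * (X.submatrix f id).det := by
  unfold cullisDet
  congr 1

lemma sum_injective_eq_strictMono' {n k : ℕ} {A : Type*} [AddCommMonoid A]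
    (F : (Fin k → Fin n) → A) :
    ∑ p ∈ univ.filter (fun p : Fin k → Fin n => Function.Injective p), F p
      = ∑ g ∈ univ.filter (fun g : Fin k → Fin n => StrictMono g),
          ∑ σ : Equiv.Perm (Fin k), F (g ∘ σ) := by
  rw [← Finset.sum_product']
  refine (Finset.sum_bij (fun q _ => q.1 ∘ q.2) ?_ ?_ ?_ ?_).symm
  · rintro ⟨g, σ⟩ hq
    rw [Finset.mem_product, Finset.mem_filter] at hq
    simp only [Finset.mem_filter, Finset.mem_univ, true_and]
    exact hq.1.2.injective.comp σ.injective
  · rintro ⟨g, σ⟩ hq ⟨g', σ'⟩ hq' h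
    rw [Finset.mem_product, Finset.mem_filter] at hq hq'
    have h' : g ∘ σ = g' ∘ σ' := h
    have hr : Set.range g = Set.range g' := by
      have h1 : Set.range (g ∘ σ) = Set.range g := by
        rw [Set.range_comp, σ.surjective.range_eq, Set.image_univ]
      have h2 : Set.range (g' ∘ σ') = Set.range g' := by
        rw [Set.range_comp, σ'.surjective.range_eq, Set.image_univ]
      rw [← h1, ← h2, h']
    haveI : WellFoundedLT (Fin k) := Finite.to_wellFoundedLT
    have hg : g = g' := (hq.1.2.range_inj hq'.1.2).mp hr
    subst hg
    have hσ : σ = σ' := by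
      apply Equiv.ext
      intro i
      exact hq.1.2.injective (congrFun h' i)
    simp [hσ]
  · intro p hp
    rw [Finset.mem_filter] at hp
    have hp' : Function.Injective p := hp.2
    have hcard : (univ.image p).card = k := by
      rw [Finset.card_image_of_injective _ hp', Finset.card_univ, Fintype.card_fin]
    set s := (univ : Finset (Fin k)).image p with hs
    have hmem : ∀ i, p i ∈ s := fun i => Finset.mem_image_of_mem _ (Finset.mem_univ i)
    set e : Fin k → Fin k := fun i => (s.orderIsoOfFin hcard).symm ⟨p i, hmem i⟩ with he
    have heinj : Function.Injective e := by
      intro i j hij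
      apply hp'
      have := congrArg (s.orderIsoOfFin hcard) hij
      simpa only [he, OrderIso.apply_symm_apply, Subtype.ext_iff] using this
    have hebij : Function.Bijective e := Finite.injective_iff_bijective.mp heinj
    refine ⟨⟨s.orderEmbOfFin hcard, Equiv.ofBijective e hebij⟩, ?_, ?_⟩
    · rw [Finset.mem_product, Finset.mem_filter]
      exact ⟨⟨Finset.mem_univ _, (s.orderEmbOfFin hcard).strictMono⟩, Finset.mem_univ _⟩
    · funext i
      show (s.orderEmbOfFin hcard) (e i) = p i
      rw [← Finset.coe_orderIsoOfFin_apply]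
      simp [he]
  · rintro ⟨g, σ⟩ _
    rfl

lemma cauchy_binet' {F : Type*} [Field F] {n k : ℕ}
    (M : Matrix (Fin k) (Fin n) F) (N : Matrix (Fin n) (Fin k) F) :
    (M * N).det = ∑ g ∈ univ.filter (fun g : Fin k → Fin n => StrictMono g),
      (M.submatrix id g).det * (N.submatrix g id).det := by
  have step1 : (M * N).det
      = ∑ p : Fin k → Fin n, (∏ i, N (p i) i) * (M.submatrix id p).det := by
    calc (M * N).det
        = ∑ p : Fin k → Fin n, ∑ σ : Perm (Fin k),
            ((Perm.sign σ : ℤ) : F) * ∏ i, M (σ i) (p i) * N (p i) i := by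
          simp only [Matrix.det_apply', Matrix.mul_apply, Finset.prod_univ_sum,
            Finset.mul_sum, Fintype.piFinset_univ]
          rw [Finset.sum_comm]
      _ = _ := by
          refine Finset.sum_congr rfl fun p _ => ?_
          rw [Matrix.det_apply', Finset.mul_sum]
          refine Finset.sum_congr rfl fun σ _ => ?_
          simp only [Matrix.submatrix_apply, id_eq, Finset.prod_mul_distrib]
          ring
  rw [step1]
  rw [← Finset.sum_filter_of_ne (p := fun p : Fin k → Fin n => Function.Injective p)
    (fun p _ hne => by
      show Function.Injective p
      by_contra hpi
      apply hne
      obtain ⟨i, j, hij, hij'⟩ : ∃ i j, p i = p j ∧ i ≠ j := by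
        rw [Function.Injective] at hpi
        push_neg at hpi
        exact hpi
      have : (M.submatrix id p).det = 0 :=
        Matrix.det_zero_of_column_eq hij' (fun x => by simp [hij])
      rw [this, mul_zero])]
  rw [sum_injective_eq_strictMono']
  refine Finset.sum_congr rfl fun g hg => ?_
  have hdet : ∀ σ : Perm (Fin k), (M.submatrix id (g ∘ σ)).det
      = ((Perm.sign σ : ℤ) : F) * (M.submatrix id g).det := by
    intro σ
    have : M.submatrix id (g ∘ σ) = (M.submatrix id g).submatrix id σ := by
      simp [Matrix.submatrix_submatrix]
    rw [this, Matrix.det_permute']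
  calc ∑ σ : Perm (Fin k), (∏ i, N ((g ∘ σ) i) i) * (M.submatrix id (g ∘ σ)).det
      = (M.submatrix id g).det * ∑ σ : Perm (Fin k),
          ((Perm.sign σ : ℤ) : F) * ∏ i, (N.submatrix g id) (σ i) i := by
        rw [Finset.mul_sum]
        refine Finset.sum_congr rfl fun σ _ => ?_
        rw [hdet σ]
        simp only [Matrix.submatrix_apply, id_eq, Function.comp_apply]
        ring
    _ = _ := by rw [← Matrix.det_apply']

lemma cullis_expand' {F : Type*} [Field F] {n k : ℕ}
    (A : Matrix (Fin n) (Fin n) F) (B : Matrix (Fin k) (Fin k) F)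
    (X : Matrix (Fin n) (Fin k) F) :
    cullisDet (A * X * B)
      = (∑ g ∈ univ.filter (fun g : Fin k → Fin n => StrictMono g),
          cullisDet (A.submatrix id g) * (X.submatrix g id).det) * B.det := by
  have h1 : ∀ f : Fin k → Fin n,
      ((A * X * B).submatrix f id).det
        = (∑ g ∈ univ.filter (fun g : Fin k → Fin n => StrictMono g),
            (A.submatrix f g).det * (X.submatrix g id).det) * B.det := by
    intro f
    have e1 : (A * X * B).submatrix f id = ((A * X).submatrix f id) * B := by
      ext i j
      simp [Matrix.mul_apply, Matrix.submatrix_apply]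
    have e2 : (A * X).submatrix f id = (A.submatrix f id) * X := by
      ext i j
      simp [Matrix.mul_apply, Matrix.submatrix_apply]
    rw [e1, Matrix.det_mul, e2, cauchy_binet']
    congr 1
  rw [cullisDet_eq']
  calc ∑ f ∈ univ.filter (fun f : Fin k → Fin n => StrictMono f),
        (-1 : F) ^ (∑ α : Fin k, ((f α : ℕ) + (α : ℕ))) * ((A * X * B).submatrix f id).det
      = ∑ f ∈ univ.filter (fun f : Fin k → Fin n => StrictMono f),
          ∑ g ∈ univ.filter (fun g : Fin k → Fin n => StrictMono g),
            (-1 : F) ^ (∑ α : Fin k, ((f α : ℕ) + (α : ℕ))) * (A.submatrix f g).det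
              * ((X.submatrix g id).det * B.det) := by
        refine Finset.sum_congr rfl fun f _ => ?_
        rw [h1 f, Finset.sum_mul, Finset.mul_sum]
        exact Finset.sum_congr rfl fun g _ => by ring
    _ = ∑ g ∈ univ.filter (fun g : Fin k → Fin n => StrictMono g),
          ∑ f ∈ univ.filter (fun f : Fin k → Fin n => StrictMono f),
            (-1 : F) ^ (∑ α : Fin k, ((f α : ℕ) + (α : ℕ))) * (A.submatrix f g).det
              * ((X.submatrix g id).det * B.det) := Finset.sum_comm
    _ = _ := by
        rw [Finset.sum_mul]
        refine Finset.sum_congr rfl fun g _ => ?_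
        rw [cullisDet_eq', Finset.sum_mul, Finset.sum_mul]
        refine Finset.sum_congr rfl fun f _ => ?_
        simp only [Matrix.submatrix_submatrix, Function.comp_id, Function.id_comp]
        ring

end Aux

/-- the map `X ↦ A * X * B` preserves the Cullis determinant iff
`cullisDet (A(|d]) * det B = sgn d` for every `k`-element subset `d` of `{1,…,n}`
(encoded by strictly monotone maps `g : Fin k → Fin n`). -/
theorem cullis_two_sided_mul_preserves_iff {F : Type*} [Field F] (n k : ℕ)
    (hk : 1 ≤ k) (hn : k ≤ n)
    (A : Matrix (Fin n) (Fin n) F) (B : Matrix (Fin k) (Fin k) F) :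
    (∀ X : Matrix (Fin n) (Fin k) F, cullisDet (A * X * B) = cullisDet X) ↔
      (∀ g : Fin k → Fin n, StrictMono g →
          cullisDet (A.submatrix id g) * B.det
            = (-1 : F) ^ (∑ α : Fin k, ((g α : ℕ) + (α : ℕ)))) := by
  haveI : WellFoundedLT (Fin k) := Finite.to_wellFoundedLT
  constructor
  · intro h g₀ hg₀
    classical
    set X₀ : Matrix (Fin n) (Fin k) F := fun i j => if i = g₀ j then 1 else 0 with hX₀
    have hdet : ∀ g : Fin k → Fin n, StrictMono g →
        (X₀.submatrix g id).det = if g = g₀ then 1 else 0 := by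
      intro g hg
      by_cases hgg : g = g₀
      · subst hgg
        rw [if_pos rfl]
        have : X₀.submatrix g id = 1 := by
          ext i j
          simp [hX₀, Matrix.submatrix, Matrix.submatrix_apply, Matrix.one_apply, hg.injective.eq_iff]
        rw [this, Matrix.det_one]
      · rw [if_neg hgg]
        have hr : Set.range g ≠ Set.range g₀ := by
          intro hr
          exact hgg ((hg.range_inj hg₀).mp hr)
        obtain ⟨i, hi⟩ : ∃ i, ∀ j, g i ≠ g₀ j := by
          by_contra hc
          push_neg at hc
          apply hr
          have hsub : Set.range g ⊆ Set.range g₀ := by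
            rintro _ ⟨i, rfl⟩
            obtain ⟨j, hj⟩ := hc i
            exact ⟨j, hj.symm⟩
          have h1 : (Finset.univ.image g : Finset (Fin n)) ⊆ Finset.univ.image g₀ := by
            intro x hx
            simp only [Finset.mem_image, Finset.mem_univ, true_and] at hx ⊢
            obtain ⟨i, rfl⟩ := hx
            obtain ⟨j, hj⟩ := hsub ⟨i, rfl⟩
            exact ⟨j, hj⟩
          have h2 : (Finset.univ.image g : Finset (Fin n)) = Finset.univ.image g₀ := by
            apply Finset.eq_of_subset_of_card_le h1
            rw [Finset.card_image_of_injective _ hg₀.injective,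
              Finset.card_image_of_injective _ hg.injective]
          have h3 : ∀ (f : Fin k → Fin n), ((Finset.univ.image f : Finset (Fin n)) : Set (Fin n))
              = Set.range f := by
            intro f
            ext x
            simp [Set.mem_range]
          rw [← h3 g, ← h3 g₀, h2]
        apply Matrix.det_eq_zero_of_row_eq_zero i
        intro j
        simp [hX₀, Matrix.submatrix, Matrix.submatrix_apply, hi j]
    have hmain := h X₀
    rw [cullis_expand', cullisDet_eq'] at hmain
    have hg₀mem : g₀ ∈ Finset.univ.filter (fun g : Fin k → Fin n => StrictMono g) :=
      Finset.mem_filter.mpr ⟨Finset.mem_univ _, hg₀⟩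
    rw [Finset.sum_eq_single_of_mem g₀ hg₀mem (fun g hgm hne => by
          rw [hdet g (Finset.mem_filter.mp hgm).2, if_neg hne, mul_zero]),
        Finset.sum_eq_single_of_mem g₀ hg₀mem (fun g hgm hne => by
          rw [hdet g (Finset.mem_filter.mp hgm).2, if_neg hne, mul_zero])] at hmain
    rw [hdet g₀ hg₀, if_pos rfl, mul_one, mul_one] at hmain
    exact hmain
  · intro h X
    rw [cullis_expand', cullisDet_eq' X, Finset.sum_mul]
    refine Finset.sum_congr rfl fun g hg => ?_
    have hgsm : StrictMono g := (Finset.mem_filter.mp hg).2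
    rw [mul_right_comm, h g hgsm]
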